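/- arXiv:2009.03260 — 2 statements merged into one kernel-verified Lean document; each statement's English description precedes it below -/
import Mathlib

section
/- Let p ≥ 2 be an even integer. Then there exist constants 0 < c ≤ C (depending only on p, of the form 2^{-O(p)} and 2^{O(p)}) such that for all real f, δ: f^p + p·f^{p-1}·δ + c·(f^{p-2}·δ² + δ^p) ≤ (f + δ)^p ≤ f^p + p·f^{p-1}·δ + C·(f^{p-2}·δ² + δ^p). -/
-- Bernoulli for even exponents, all real a
lemma aux_bern (n : ℕ) (hn : Even n) (a : ℝ) : 1 + n * a ≤ (1 + a) ^ n := by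
  rcases le_or_gt (-2) a with h | h
  · exact one_add_mul_le_pow h n
  · rcases Nat.eq_zero_or_pos n with rfl | hn1
    · simp
    · have h0 : (0:ℝ) ≤ (1+a)^n := hn.pow_nonneg _
      have h1 : (1:ℝ) ≤ (n:ℝ) := by exact_mod_cast hn1
      nlinarith

-- tangent line inequality for even powers
lemma aux_tangent (q : ℕ) (hq : Even q) (x y : ℝ) :
    y^(q+2) + (q+2) * y^(q+1) * (x - y) ≤ x^(q+2) := by
  have hp : Even (q+2) := by simpa [Nat.even_add] using hq
  rcases eq_or_ne y 0 with rfl | hy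
  · simp [hp.pow_nonneg x]
  · have hyp : 0 < y^(q+2) := hp.pow_pos hy
    have hb := aux_bern (q+2) hp (x/y - 1)
    rw [show (1:ℝ) + (x/y - 1) = x/y by ring] at hb
    have h2 := mul_le_mul_of_nonneg_right hb hyp.le
    have hxy : (x/y)^(q+2) * y^(q+2) = x^(q+2) := by
      rw [div_pow]; field_simp
    rw [hxy] at h2
    have hkey : (1 + ((q:ℝ)+2) * (x/y - 1)) * y^(q+2) =
        y^(q+2) + ((q:ℝ)+2) * y^(q+1) * (x - y) := by
      field_simp
      ring
    push_cast at h2 ⊢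
    linarith [hkey ▸ h2]


lemma aux_threeterm (q : ℕ) (hq : Even q) (hq0 : q ≠ 0) (a b : ℝ) :
    2*a^(q+2) + 2*b^(q+2) + 2*a^q*b^2 ≤ (a+b)^(q+2) + (a-b)^(q+2) := by
  have hp : Even (q+2) := by simpa [Nat.even_add] using hq
  set F : ℕ → ℝ := fun k =>
    a^k * b^(q+2-k) * ((q+2).choose k) + a^k * (-b)^(q+2-k) * ((q+2).choose k) with hF
  have hsum : (a+b)^(q+2) + (a-b)^(q+2) = ∑ k ∈ Finset.range (q+3), F k := by
    rw [Finset.sum_add_distrib, ← add_pow, show a - b = a + (-b) by ring, ← add_pow]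
  have hFnn : ∀ k ∈ Finset.range (q+3), 0 ≤ F k := by
    intro k hk
    simp only [Finset.mem_range] at hk
    rcases Nat.even_or_odd (q+2-k) with he | ho
    · have hke : Even k := ((Nat.even_sub (by omega : k ≤ q+2)).mp he).mp hp
      have hnb : (-b)^(q+2-k) = b^(q+2-k) := he.neg_pow b
      rw [hF]
      simp only [hnb]
      have h2 : 0 ≤ a^k := hke.pow_nonneg a
      have h3 : 0 ≤ b^(q+2-k) := he.pow_nonneg b
      positivity
    · have hnb : (-b)^(q+2-k) = -(b^(q+2-k)) := ho.neg_pow b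
      rw [hF]
      simp only [hnb]
      ring_nf
      exact le_refl _
  have hsubset : ({0, q, q+2} : Finset ℕ) ⊆ Finset.range (q+3) := by
    intro k hk
    simp only [Finset.mem_insert, Finset.mem_singleton] at hk
    simp only [Finset.mem_range]
    omega
  have hle : ∑ k ∈ ({0, q, q+2} : Finset ℕ), F k ≤ ∑ k ∈ Finset.range (q+3), F k :=
    Finset.sum_le_sum_of_subset_of_nonneg hsubset (fun i hi _ => hFnn i hi)
  have heval : ∑ k ∈ ({0, q, q+2} : Finset ℕ), F k
      = F 0 + F q + F (q+2) := by
    rw [Finset.sum_insert (by simp; omega), Finset.sum_insert (by simp), Finset.sum_singleton]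
    ring
  have hF0 : F 0 = 2 * b^(q+2) := by
    rw [hF]
    simp [hp.neg_pow b]
    ring
  have hFp : F (q+2) = 2 * a^(q+2) := by
    rw [hF]
    simp
    ring
  have hFq : 2*a^q*b^2 ≤ F q := by
    rw [hF]
    simp only [show q+2-q = 2 by omega, neg_sq]
    have hC : (1:ℝ) ≤ (((q+2).choose q : ℕ) : ℝ) := by
      exact_mod_cast Nat.succ_le_of_lt (Nat.choose_pos (by omega : q ≤ q+2))
    have h2 : 0 ≤ a^q * b^2 := mul_nonneg (hq.pow_nonneg a) (sq_nonneg b)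
    nlinarith [mul_le_mul_of_nonneg_right hC h2]
  rw [hsum]
  calc 2*a^(q+2) + 2*b^(q+2) + 2*a^q*b^2 ≤ F 0 + F q + F (q+2) := by
        rw [hF0, hFp]; linarith
    _ = ∑ k ∈ ({0, q, q+2} : Finset ℕ), F k := heval.symm
    _ ≤ _ := hle


lemma aux_interp (q k : ℕ) (hk : k ≤ q) (hq : Even q) (f δ : ℝ) :
    f^k * δ^(q+2-k) ≤ f^q * δ^2 + δ^(q+2) := by
  have hP : Even (q+2) := by simpa [Nat.even_add] using hq
  have h1 : f^k * δ^(q+2-k) ≤ |f|^k * |δ|^(q+2-k) := by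
    calc f^k * δ^(q+2-k) ≤ |f^k * δ^(q+2-k)| := le_abs_self _
      _ = |f|^k * |δ|^(q+2-k) := by rw [abs_mul, abs_pow, abs_pow]
  rcases le_total |f| |δ| with h | h
  · have h2 : |f|^k * |δ|^(q+2-k) ≤ |δ|^k * |δ|^(q+2-k) :=
      mul_le_mul_of_nonneg_right (pow_le_pow_left₀ (abs_nonneg f) h k)
        (pow_nonneg (abs_nonneg δ) _)
    have h3 : |δ|^k * |δ|^(q+2-k) = δ^(q+2) := by
      rw [← pow_add, show k + (q+2-k) = q+2 by omega, hP.pow_abs]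
    have h4 : 0 ≤ f^q * δ^2 := mul_nonneg (hq.pow_nonneg f) (sq_nonneg δ)
    linarith [h1, h2, h3 ▸ h2]
  · have hsplit : |δ|^(q+2-k) = |δ|^(q-k) * |δ|^2 := by
      rw [← pow_add]; congr 1; omega
    have h2 : |f|^k * (|δ|^(q-k) * |δ|^2) ≤ |f|^k * (|f|^(q-k) * |δ|^2) := by
      apply mul_le_mul_of_nonneg_left _ (pow_nonneg (abs_nonneg f) k)
      exact mul_le_mul_of_nonneg_right (pow_le_pow_left₀ (abs_nonneg δ) h _) (sq_nonneg _)
    have h3 : |f|^k * (|f|^(q-k) * |δ|^2) = f^q * δ^2 := by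
      rw [← mul_assoc, ← pow_add, show k + (q-k) = q by omega, hq.pow_abs, sq_abs]
    have h4 : 0 ≤ δ^(q+2) := hP.pow_nonneg δ
    nlinarith [h1, hsplit ▸ h2, h3]

lemma aux_upper (q : ℕ) (hq : Even q) (f δ : ℝ) :
    (f + δ)^(q+2) ≤ f^(q+2) + (q+2) * f^(q+1) * δ + 2^(q+2) * (f^q * δ^2 + δ^(q+2)) := by
  have hM : 0 ≤ f^q * δ^2 + δ^(q+2) := by
    have hP : Even (q+2) := by simpa [Nat.even_add] using hq
    have := mul_nonneg (hq.pow_nonneg f) (sq_nonneg δ)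
    have := hP.pow_nonneg δ
    linarith
  rw [add_pow]
  rw [show q+3 = (q+1)+1+1 by ring] at *
  rw [Finset.sum_range_succ, Finset.sum_range_succ]
  have e1 : f^(q+1+1) * δ^(q+2-(q+1+1)) * (((q+2).choose (q+1+1) : ℕ) : ℝ) = f^(q+2) := by
    norm_num
  have e2 : f^(q+1) * δ^(q+2-(q+1)) * (((q+2).choose (q+1) : ℕ) : ℝ)
      = (q+2) * f^(q+1) * δ := by
    rw [show q+2-(q+1) = 1 by omega, show (q+2).choose (q+1) = q+2 by
      rw [show q+2 = (q+1)+1 by ring, Nat.choose_succ_self_right]]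
    push_cast
    ring
  have hb : ∑ k ∈ Finset.range (q+1), f^k * δ^(q+2-k) * (((q+2).choose k : ℕ) : ℝ)
      ≤ 2^(q+2) * (f^q * δ^2 + δ^(q+2)) := by
    calc ∑ k ∈ Finset.range (q+1), f^k * δ^(q+2-k) * (((q+2).choose k : ℕ) : ℝ)
        ≤ ∑ k ∈ Finset.range (q+1), (f^q * δ^2 + δ^(q+2)) * (((q+2).choose k : ℕ) : ℝ) := by
          apply Finset.sum_le_sum
          intro k hk
          simp only [Finset.mem_range] at hk
          exact mul_le_mul_of_nonneg_right
            (aux_interp q k (by omega) hq f δ) (Nat.cast_nonneg _)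
      _ = (f^q * δ^2 + δ^(q+2)) * ((∑ k ∈ Finset.range (q+1), (q+2).choose k : ℕ) : ℝ) := by
          rw [← Finset.mul_sum]; push_cast; ring
      _ ≤ 2^(q+2) * (f^q * δ^2 + δ^(q+2)) := by
          rw [mul_comm]
          apply mul_le_mul_of_nonneg_right _ hM
          have hsub : ∑ k ∈ Finset.range (q+1), (q+2).choose k
              ≤ ∑ k ∈ Finset.range (q+2+1), (q+2).choose k :=
            Finset.sum_le_sum_of_subset (by
              apply Finset.range_subset_range.mpr; omega)
          rw [Nat.sum_range_choose] at hsub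
          exact_mod_cast hsub
  linarith [hb, e1.ge, e2.ge, e1.le, e2.le]

theorem pth_power_sandwich (p : ℕ) (hp : Even p) (hp2 : 2 ≤ p) :
    ∃ c C : ℝ, 0 < c ∧ c ≤ C ∧ ∀ f δ : ℝ,
      f^p + p * f^(p-1) * δ + c * (f^(p-2) * δ^2 + δ^p) ≤ (f + δ)^p ∧
      (f + δ)^p ≤ f^p + p * f^(p-1) * δ + C * (f^(p-2) * δ^2 + δ^p) := by
  rcases eq_or_lt_of_le hp2 with h2 | h4
  · -- p = 2
    subst h2
    refine ⟨1/2, 1/2, by norm_num, le_refl _, fun f δ => ?_⟩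
    norm_num
    constructor <;> nlinarith [sq_nonneg (f+δ)]
  · -- p ≥ 4
    obtain ⟨q, rfl⟩ : ∃ q, p = q + 2 := ⟨p-2, by omega⟩
    have hq : Even q := by simpa [Nat.even_add] using hp
    have hq0 : q ≠ 0 := by omega
    have hPeven : Even (q+2) := hp
    refine ⟨(1/2)^(q+2), 2^(q+2), by positivity, ?_, fun f δ => ⟨?_, ?_⟩⟩
    · exact pow_le_pow_left₀ (by norm_num) (by norm_num) (q+2)
    · -- LOWER BOUND
      simp only [show q+2-1 = q+1 from rfl, show q+2-2 = q from rfl]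
      set c : ℝ := (1/2)^(q+2) with hc
      have hc0 : 0 ≤ c := by positivity
      have hB := aux_threeterm q hq hq0 (f + δ/2) (δ/2)
      rw [show f + δ/2 + δ/2 = f + δ by ring, show f + δ/2 - δ/2 = f by ring] at hB
      have hT := aux_tangent q hq (f + δ/2) f
      rw [show f + δ/2 - f = δ/2 by ring] at hT
      have key : f^(q+2) + ((q:ℝ)+2)*f^(q+1)*δ + 2*(δ/2)^(q+2)
          + 2*(f+δ/2)^q*(δ/2)^2 ≤ (f+δ)^(q+2) := by nlinarith [hB, hT]
      have hZ : (0:ℝ) ≤ (f+δ/2)^q := hq.pow_nonneg _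
      have hsplit : (δ/2)^(q+2) = δ^(q+2) * c := by
        rw [hc, div_eq_mul_one_div δ 2, mul_pow]
      have hδP : (0:ℝ) ≤ δ^(q+2) := hPeven.pow_nonneg δ
      have hfq : (0:ℝ) ≤ f^q := hq.pow_nonneg f
      suffices h : c * (f^q*δ^2 + δ^(q+2)) ≤ 2*(δ/2)^(q+2) + 2*(f+δ/2)^q*(δ/2)^2 by
        push_cast
        linarith [key, h]
      rcases le_total |f| |δ| with hcase | hcase
      · -- |f| ≤ |δ| : f^q*δ^2 ≤ δ^(q+2)
        have h1 : f^q * δ^2 ≤ δ^(q+2) := by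
          have e1 : f^q ≤ |δ|^q := by
            rw [← hq.pow_abs f]; exact pow_le_pow_left₀ (abs_nonneg f) hcase q
          have e2 : |δ|^q * δ^2 = δ^(q+2) := by
            rw [← sq_abs δ, ← pow_add, hPeven.pow_abs]
          nlinarith [mul_le_mul_of_nonneg_right e1 (sq_nonneg δ)]
        have h2 : c * (f^q*δ^2 + δ^(q+2)) ≤ c * (2*δ^(q+2)) :=
          mul_le_mul_of_nonneg_left (by linarith) hc0
        have h3 : c * (2*δ^(q+2)) = 2*(δ/2)^(q+2) := by rw [hsplit]; ring
        have hq2 : ((δ:ℝ)/2)^2 = δ^2/4 := by ring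
        rw [hq2]
        nlinarith [hZ, sq_nonneg δ, h2, h3]
      · -- |δ| ≤ |f|
        have habs : |f|/2 ≤ |f + δ/2| := by
          have : |f| ≤ |f + δ/2| + |δ|/2 := by
            calc |f| = |(f + δ/2) + (-(δ/2))| := by ring_nf
              _ ≤ |f + δ/2| + |(-(δ/2))| := abs_add_le _ _
              _ = |f + δ/2| + |δ|/2 := by rw [abs_neg, abs_div]; norm_num
          linarith
        have hZf : f^q ≤ (f+δ/2)^q * 2^q := by
          have e1 : (|f|/2)^q ≤ |f+δ/2|^q :=
            pow_le_pow_left₀ (by positivity) habs q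
          rw [hq.pow_abs] at e1
          rw [div_pow] at e1
          rw [← hq.pow_abs f]
          have h2q : (0:ℝ) < 2^q := by positivity
          rw [div_le_iff₀ h2q] at e1
          exact e1
        have hhalf : ((1:ℝ)/2)^q * 2^q = 1 := by rw [← mul_pow]; norm_num
        have hc4 : c * 2^q = 1/4 := by
          rw [hc, pow_add]
          calc ((1:ℝ)/2)^q * (1/2)^2 * 2^q = ((1/2)^q * 2^q) * ((1/2)^2) := by ring
            _ = 1/4 := by rw [hhalf]; norm_num
        have h5 := mul_le_mul_of_nonneg_left hZf (mul_nonneg hc0 (sq_nonneg δ))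
        have h6 : (c*δ^2) * ((f+δ/2)^q * 2^q) = (1/4)*((f+δ/2)^q*δ^2) := by
          linear_combination ((f+δ/2)^q*δ^2) * hc4
        have hq2 : ((δ:ℝ)/2)^2 = δ^2/4 := by ring
        rw [hsplit, hq2]
        have h7 : c * δ^(q+2) ≤ 2*(δ^(q+2)*c) := by
          linarith [mul_nonneg hδP hc0]
        linarith [h5, h6, h7, mul_nonneg hZ (sq_nonneg δ)]
    · -- UPPER BOUND
      simp only [show q+2-1 = q+1 from rfl, show q+2-2 = q from rfl]
      have := aux_upper q hq f δ
      push_cast at this ⊢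
      linarith
end

section
/- Suppose w⁺', w⁻', w⁺'', w⁻'' ≥ 0, a, b > 0 satisfy w⁺'/a - w⁻'/b = w⁺''/a - w⁻''/b, where (w⁺'', w⁻'') is pointwise minimal nonnegative with this property. If additionally w⁺'/u⁺ = w⁻'/u⁻ for some u⁺, u⁻ > 0 with a = u⁺ - f̂, b = u⁻ + f̂, and (u⁺-f̂)/(u⁻+f̂) = (1 ± ε)·u⁺/u⁻ for some 0 ≤ ε < 1, then w⁺'' + w⁻'' ≤ O(ε)·(w⁺' + w⁻'') i.e. there is an absolute constant C with w⁺'' + w⁻'' ≤ C·ε·(w⁺' + w⁻'). -/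
theorem weight_reduction : ∃ C : ℝ, 0 < C ∧
    ∀ (wp' wm' wp'' wm'' up um fh ε : ℝ),
      0 ≤ wp' → 0 ≤ wm' → 0 < up → 0 < um → 0 < up - fh → 0 < um + fh →
      wp' / up = wm' / um →
      0 ≤ ε → ε < 1 →
      |(up - fh)/(um + fh) - up/um| ≤ ε * (up/um) →
      0 ≤ wp'' → 0 ≤ wm'' →
      wp''/(up - fh) - wm''/(um + fh) = wp'/(up - fh) - wm'/(um + fh) →
      (∀ v₁ v₂ : ℝ, 0 ≤ v₁ → 0 ≤ v₂ →
        v₁/(up - fh) - v₂/(um + fh) = wp'/(up - fh) - wm'/(um + fh) →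
        wp'' ≤ v₁ ∧ wm'' ≤ v₂) →
      wp'' + wm'' ≤ C * ε * (wp' + wm') := by
  refine ⟨1, one_pos, ?_⟩
  intro wp' wm' wp'' wm'' up um fh ε hwp hwm hup hum ha hb hprop hε hε1 hdev hwp'' hwm'' heq hmin
  set a := up - fh with hA
  set b := um + fh with hB
  set D := wp'/a - wm'/b with hD
  have hprop' : wp' * um = wm' * up := by
    field_simp at hprop; linarith
  have h5 : wp' * um * a = wm' * up * a := by rw [hprop']
  have hbum : (0:ℝ) < b * um := mul_pos hb hum
  have key : |a * um - up * b| ≤ ε * up * b := by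
    have h1 : a/b - up/um = (a*um - up*b)/(b*um) := by field_simp
    rw [h1, abs_div, abs_of_pos hbum, div_le_iff₀ hbum] at hdev
    calc |a*um - up*b| ≤ ε*(up/um)*(b*um) := hdev
      _ = ε*up*b := by field_simp
  rw [abs_le] at key
  rcases le_or_gt 0 D with hDpos | hDneg
  · -- wm'' = 0, wp'' = a * D
    obtain ⟨h2, h3⟩ := hmin (a*D) 0 (by positivity) le_rfl
      (by rw [zero_div, sub_zero, mul_div_cancel_left₀ _ ha.ne'])
    have hwm0 : wm'' = 0 := le_antisymm h3 hwm''
    have hwp2 : wp'' = a * D := by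
      rw [hwm0, zero_div, sub_zero, div_eq_iff ha.ne'] at heq
      rw [heq, mul_comm]
    rw [hwm0, hwp2, hD, one_mul]
    have hexp : a * (wp'/a - wm'/b) = (wp' * b - wm' * a) / b := by field_simp
    rw [add_zero, hexp, div_le_iff₀ hb]
    nlinarith [mul_le_mul_of_nonneg_left key.1 hwp, h5,
      mul_nonneg (mul_nonneg (mul_nonneg hε hwm) hb.le) hup.le]
  · -- wp'' = 0, wm'' = b * (-D)
    obtain ⟨h2, h3⟩ := hmin 0 (b*(-D)) le_rfl
      (mul_nonneg hb.le (neg_nonneg.mpr hDneg.le))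
      (by rw [zero_div, zero_sub, mul_div_cancel_left₀ _ hb.ne', neg_neg])
    have hwp0 : wp'' = 0 := le_antisymm h2 hwp''
    have hwm2 : wm'' = b * (-D) := by
      rw [hwp0, zero_div, zero_sub, neg_eq_iff_eq_neg, div_eq_iff hb.ne'] at heq
      rw [heq]; ring
    rw [hwp0, hwm2, hD, one_mul]
    have hexp : b * (-(wp'/a - wm'/b)) = (wm' * a - wp' * b) / a := by field_simp; ring
    rw [zero_add, hexp, div_le_iff₀ ha]
    have hDb : wp' * b < wm' * a := by
      rw [hD, sub_neg, div_lt_div_iff₀ ha hb] at hDneg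
      linarith
    nlinarith [mul_le_mul_of_nonneg_left key.2 hwp, h5,
      mul_le_mul_of_nonneg_left hDb.le (mul_nonneg hε hup.le),
      mul_nonneg (mul_nonneg (mul_nonneg hε hwp) ha.le) hup.le]
end
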